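/- arXiv:1212.6150 — 2 statements merged into one kernel-verified Lean document; each statement's English description precedes it below -/
import Mathlib

section
/- For every natural number q and every integer n, the congruence x₁² + x₂² + x₃³ + x₄³ + x₅⁶ + x₆⁶ ≡ n (mod q) is soluble in integers x₁, …, x₆. -/
open MeasureTheory Filter Set Topology

noncomputable section

/-- `e(x) = exp(2πix)`. -/
def e (x : ℝ) : ℂ := Complex.exp (2 * Real.pi * Complex.I * x)

/-- The Gauss-type sum `S_k(q,a) = ∑_{r=1}^q e(a r^k / q)`. -/
def S (k q : ℕ) (a : ℤ) : ℂ :=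
  ∑ r ∈ Finset.Icc 1 q, e ((a : ℝ) * (r : ℝ) ^ k / (q : ℝ))

/-- `A(q;n) = ∑_{a=1,(a,q)=1}^{q} q^{-6} S₂(q,a)² S₃(q,a)² S₆(q,a)² e(-na/q)`. -/
def A (q : ℕ) (n : ℤ) : ℂ :=
  ∑ a ∈ (Finset.Icc 1 q).filter (fun a => Nat.gcd a q = 1),
    (q : ℂ) ^ (-(6 : ℤ)) * S 2 q a ^ 2 * S 3 q a ^ 2 * S 6 q a ^ 2 *
      e (-(n : ℝ) * (a : ℝ) / (q : ℝ))

/-- The singular series `𝔖(n) = ∑_{q=1}^∞ A(q;n)`. -/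
def SS (n : ℤ) : ℂ := ∑' q : ℕ, A (q + 1) n

/-- `R(n)`: the number of representations `n = x₁²+x₂²+x₃³+x₄³+x₅⁶+x₆⁶` in positive integers. -/
def R (n : ℕ) : ℕ :=
  Nat.card {x : Fin 6 → ℕ //
    (∀ i, 1 ≤ x i) ∧
    x 0 ^ 2 + x 1 ^ 2 + x 2 ^ 3 + x 3 ^ 3 + x 4 ^ 6 + x 5 ^ 6 = n}

/-- The constant `(27/32)·2^{1/3}·Γ(4/3)⁶`. -/
def kappa : ℝ := 27 / 32 * 2 ^ ((1 : ℝ) / 3) * Real.Gamma (4 / 3) ^ 6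

/-- `P_k = ⌊X^{1/k}⌋`. -/
def Pk (X : ℝ) (k : ℕ) : ℕ := Nat.floor (X ^ ((1 : ℝ) / k))

/-- The Weyl sum `f_k(α) = ∑_{1 ≤ x ≤ P_k} e(α x^k)`. -/
def f (X : ℝ) (k : ℕ) (α : ℝ) : ℂ :=
  ∑ x ∈ Finset.Icc 1 (Pk X k), e (α * (x : ℝ) ^ k)

/-- `v_k(β) = ∫_0^{P_k} e(β γ^k) dγ`. -/
def v (X : ℝ) (k : ℕ) (β : ℝ) : ℂ :=
  ∫ γ in (0 : ℝ)..(Pk X k : ℝ), e (β * γ ^ k)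

/-- The major arcs `𝔓`: union of `{α ∈ [0,1) : |α - a/q| ≤ W/X}` over `0 ≤ a ≤ q ≤ W`, `(a,q)=1`. -/
def majorP (X W : ℝ) : Set ℝ :=
  {α | α ∈ Set.Ico (0 : ℝ) 1 ∧ ∃ q a : ℕ, 1 ≤ q ∧ a ≤ q ∧ (q : ℝ) ≤ W ∧
    Nat.gcd a q = 1 ∧ |α - (a : ℝ) / (q : ℝ)| ≤ W / X}

/-- The minor arcs `𝔭 = [0,1) \ 𝔓`. -/
def minorp (X W : ℝ) : Set ℝ := Set.Ico (0 : ℝ) 1 \ majorP X W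

/-- `𝔐(Q)`: union of `{α ∈ [0,1) : |qα - a| ≤ Q/X}` over `0 ≤ a ≤ q ≤ Q`, `(a,q)=1`. -/
def arcM (X Q : ℝ) : Set ℝ :=
  {α | α ∈ Set.Ico (0 : ℝ) 1 ∧ ∃ q a : ℕ, 1 ≤ q ∧ a ≤ q ∧ (q : ℝ) ≤ Q ∧
    Nat.gcd a q = 1 ∧ |(q : ℝ) * α - (a : ℝ)| ≤ Q / X}

/-- `𝔑(Q) = 𝔐(Q) \ 𝔐(Q/2)`. -/
def arcN (X Q : ℝ) : Set ℝ := arcM X Q \ arcM X (Q / 2)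

/-- The least denominator `q` of an arc `𝔐(q,a) ⊆ 𝔐(Q)` containing `α`. -/
def arcq (X Q α : ℝ) : ℕ :=
  sInf {q : ℕ | 1 ≤ q ∧ (q : ℝ) ≤ Q ∧ ∃ a : ℕ, a ≤ q ∧ Nat.gcd a q = 1 ∧
    |(q : ℝ) * α - (a : ℝ)| ≤ Q / X}

/-- The numerator `a` corresponding to the chosen denominator `arcq X Q α`. -/
def arca (X Q α : ℝ) : ℕ :=
  sInf {a : ℕ | a ≤ arcq X Q α ∧ Nat.gcd a (arcq X Q α) = 1 ∧
    |(arcq X Q α : ℝ) * α - (a : ℝ)| ≤ Q / X}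

/-- `f̃₂(α) = P₂ (q + P₂²|qα - a|)^{-1/2}` for `α` in the arc `𝔐(q,a) ⊆ 𝔐(Q)` with `q` least. -/
def ftil2 (X Q α : ℝ) : ℝ :=
  (Pk X 2 : ℝ) *
    ((arcq X Q α : ℝ) + (Pk X 2 : ℝ) ^ 2 * |(arcq X Q α : ℝ) * α - (arca X Q α : ℝ)|) ^
      (-(1 : ℝ) / 2)

/-- `f₃*(α) = q⁻¹ S₃(q,a) v₃(α - a/q)` for `α` in the arc `𝔐(q,a) ⊆ 𝔐(Q)` with `q` least. -/
def f3star (X Q α : ℝ) : ℂ :=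
  ((arcq X Q α : ℕ) : ℂ)⁻¹ * S 3 (arcq X Q α) ((arca X Q α : ℕ) : ℤ) *
    v X 3 (α - (arca X Q α : ℝ) / (arcq X Q α : ℝ))

/-- `K(α) = ∑_{n ∈ 𝒵} η_n e(-nα)`. -/
def K (Z : Finset ℤ) (η : ℤ → ℂ) (α : ℝ) : ℂ :=
  ∑ n ∈ Z, η n * e (-((n : ℝ) * α))

/-- The truncated singular integral `J(n;W)`. -/
def J (X W : ℝ) (n : ℤ) : ℂ :=
  ∫ β in (-(W / X))..(W / X), v X 2 β ^ 2 * v X 3 β ^ 2 * v X 6 β ^ 2 * e (-(β * (n : ℝ)))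

end


lemma base_odd (p : ℕ) (hp : p.Prime) (n : ZMod p) :
    ∃ x y a : ZMod p, x ≠ 0 ∧ x ^ 2 + y ^ 2 + a ^ 3 = n := by
  haveI : Fact p.Prime := ⟨hp⟩
  set a : ZMod p := if n = 0 then 1 else 0 with ha
  have hm : n - a ^ 3 ≠ 0 := by
    by_cases h : n = 0 <;> simp [ha, h]
  obtain ⟨u, v, huv⟩ := ZMod.sq_add_sq p (n - a ^ 3)
  by_cases hu : u = 0
  · refine ⟨v, u, a, ?_, by rw [add_comm (v^2)]; rw [huv]; ring⟩
    rintro rfl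
    exact hm (by rw [← huv, hu]; ring)
  · exact ⟨u, v, a, hu, by rw [huv]; ring⟩

/-- Hensel lifting for odd primes: solubility of `x²+y²+a³ ≡ n` mod `p^(k+1)`. -/
lemma hensel_odd (p : ℕ) (hp : p.Prime) (hodd : p ≠ 2) :
    ∀ k : ℕ, ∀ n : ℤ, ∃ x y a : ℤ, ¬ ((p : ℤ) ∣ x) ∧
      x ^ 2 + y ^ 2 + a ^ 3 ≡ n [ZMOD (p : ℤ) ^ (k + 1)] := by
  haveI : Fact p.Prime := ⟨hp⟩
  intro k
  induction k with
  | zero =>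
    intro n
    obtain ⟨x0, y0, a0, hx0, h⟩ := base_odd p hp (n : ZMod p)
    refine ⟨(x0.val : ℤ), (y0.val : ℤ), (a0.val : ℤ), ?_, ?_⟩
    · intro hdvd
      apply hx0
      rw [Int.natCast_dvd_natCast] at hdvd
      have := (ZMod.natCast_eq_zero_iff x0.val p).mpr hdvd
      rwa [ZMod.natCast_rightInverse x0] at this
    · rw [pow_one, ← ZMod.intCast_eq_intCast_iff]
      push_cast
      rw [ZMod.natCast_rightInverse x0, ZMod.natCast_rightInverse y0,
        ZMod.natCast_rightInverse a0]
      exact h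
  | succ k ih =>
    intro n
    obtain ⟨x, y, a, hx, hcong⟩ := ih n
    obtain ⟨d, hd⟩ := (Int.modEq_iff_dvd.mp hcong : (p:ℤ)^(k+1) ∣ n - (x^2+y^2+a^3))
    have hpint : Prime ((p : ℤ)) := Nat.prime_iff_prime_int.mp hp
    have h2x : ¬ ((p : ℤ) ∣ 2 * x) := by
      intro h
      rcases hpint.dvd_mul.mp h with h2 | hx'
      · have : p ∣ 2 := Int.ofNat_dvd.mp (by exact_mod_cast h2)
        exact hodd ((Nat.prime_dvd_prime_iff_eq hp Nat.prime_two).mp this)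
      · exact hx hx'
    obtain ⟨u, v, huv⟩ := (hpint.coprime_iff_not_dvd.mpr h2x).symm
    -- u * (2x) + v * p = 1 ; take t := u * d
    refine ⟨x + (p:ℤ)^(k+1) * (u * d), y, a, ?_, ?_⟩
    · intro hdvd
      have hc : (p:ℤ) ∣ (p:ℤ)^(k+1) * (u * d) :=
        dvd_mul_of_dvd_left (dvd_pow_self _ (Nat.succ_ne_zero k)) _
      have := dvd_sub hdvd hc
      simp only [add_sub_cancel_right] at this
      exact hx this
    · rw [Int.modEq_comm, Int.modEq_iff_dvd]
      have key : n - ((x + (p:ℤ)^(k+1) * (u * d)) ^ 2 + y ^ 2 + a ^ 3)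
          = (p:ℤ)^(k+2) * (v * d) - (p:ℤ)^(k+2) * ((p:ℤ)^k * (u*d)^2) := by
        linear_combination hd - ((p:ℤ)^(k+1)*d) * huv
      have : ((p:ℤ)^(k+2)) ∣ n - ((x + (p:ℤ)^(k+1) * (u * d)) ^ 2 + y ^ 2 + a ^ 3) := by
        rw [key]; exact dvd_sub (Dvd.intro _ rfl) (Dvd.intro _ rfl)
      exact dvd_sub_comm.mp this

/-- Hensel lifting for `p = 2`: solubility of `a³ + b³ ≡ n` mod `2^(k+1)`. -/
lemma hensel_two :
    ∀ k : ℕ, ∀ n : ℤ, ∃ a b : ℤ, ¬ ((2 : ℤ) ∣ a) ∧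
      a ^ 3 + b ^ 3 ≡ n [ZMOD (2 : ℤ) ^ (k + 1)] := by
  intro k
  induction k with
  | zero =>
    intro n
    refine ⟨1, n + 1, by norm_num, ?_⟩
    rw [Int.modEq_comm, Int.modEq_iff_dvd]
    obtain ⟨c, hc⟩ := Int.even_mul_succ_self n
    exact ⟨c * (n + 2) + 1, by linear_combination (n + 2) * hc⟩
  | succ k ih =>
    intro n
    obtain ⟨a, b, ha, hcong⟩ := ih n
    obtain ⟨d, hd⟩ :=
      (Int.modEq_iff_dvd.mp hcong : (2:ℤ)^(k+1) ∣ n - (a^3 + b^3))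
    obtain ⟨m, hm⟩ := Int.not_even_iff_odd.mp (fun he => ha he.two_dvd)
    refine ⟨a + (2:ℤ)^(k+1) * d, b, ?_, ?_⟩
    · intro hdvd
      have hc : (2:ℤ) ∣ (2:ℤ)^(k+1) * d :=
        dvd_mul_of_dvd_left (dvd_pow_self _ (Nat.succ_ne_zero k)) _
      have := dvd_sub hdvd hc
      simp only [add_sub_cancel_right] at this
      exact ha this
    · rw [Int.modEq_comm, Int.modEq_iff_dvd]
      have key : n - ((a + (2:ℤ)^(k+1) * d) ^ 3 + b ^ 3)
          = (2:ℤ)^(k+2) * (d * (-6*m^2 - 6*m - 1))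
            - (2:ℤ)^(k+2) * ((2:ℤ)^k * (3*a*d^2))
            - (2:ℤ)^(k+2) * ((2:ℤ)^(2*k+1) * d^3) := by
        linear_combination hd - 3*(2:ℤ)^(k+1)*d*(2*m+1+a) * hm
      have : ((2:ℤ)^(k+2)) ∣ n - ((a + (2:ℤ)^(k+1) * d) ^ 3 + b ^ 3) := by
        rw [key]
        exact dvd_sub (dvd_sub (Dvd.intro _ rfl) (Dvd.intro _ rfl)) (Dvd.intro _ rfl)
      exact dvd_sub_comm.mp this

/-- Solubility of `x² + y² + a³ + b³ = n` in `ZMod q` for prime powers `q = p^k`. -/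
lemma pow_sol (p k : ℕ) (hp : p.Prime) (hk : 0 < k) (n : ZMod (p ^ k)) :
    ∃ x y a b : ZMod (p ^ k), x ^ 2 + y ^ 2 + a ^ 3 + b ^ 3 = n := by
  haveI : NeZero (p ^ k) := ⟨pow_ne_zero k hp.pos.ne'⟩
  obtain ⟨j, rfl⟩ : ∃ j, k = j + 1 := ⟨k - 1, by omega⟩
  by_cases h2 : p = 2
  · subst h2
    obtain ⟨a, b, -, hab⟩ := hensel_two j ((n.val : ℤ))
    rw [show ((2:ℤ)) = ((2:ℕ) : ℤ) by norm_num, ← Nat.cast_pow] at hab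
    have h := (ZMod.intCast_eq_intCast_iff _ _ _).mpr hab
    refine ⟨0, 0, ((a : ℤ) : ZMod (2 ^ (j+1))), ((b : ℤ) : ZMod (2 ^ (j+1))), ?_⟩
    push_cast at h
    rw [ZMod.natCast_rightInverse n] at h
    rw [← h]; ring
  · obtain ⟨x, y, a, -, hxy⟩ := hensel_odd p hp h2 j ((n.val : ℤ))
    rw [← Nat.cast_pow] at hxy
    have h := (ZMod.intCast_eq_intCast_iff _ _ _).mpr hxy
    refine ⟨((x : ℤ) : ZMod (p ^ (j+1))), ((y : ℤ) : ZMod (p ^ (j+1))),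
      ((a : ℤ) : ZMod (p ^ (j+1))), 0, ?_⟩
    push_cast at h
    rw [ZMod.natCast_rightInverse n] at h
    rw [← h]; ring

/-- Solubility of `x² + y² + a³ + b³ = n` in `ZMod q` for every `q`. -/
lemma zmod_sol : ∀ q : ℕ, q ≠ 0 → ∀ n : ZMod q,
    ∃ x y a b : ZMod q, x ^ 2 + y ^ 2 + a ^ 3 + b ^ 3 = n := by
  intro q
  induction q using Nat.recOnPosPrimePosCoprime with
  | prime_pow p k hp hk => exact fun _ n => pow_sol p k hp hk n
  | zero => exact fun h => absurd rfl h
  | one => exact fun _ n => ⟨0, 0, 0, 0, Subsingleton.elim _ _⟩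
  | coprime a b ha hb hab iha ihb =>
    intro _ n
    obtain ⟨e⟩ : Nonempty (ZMod (a * b) ≃+* ZMod a × ZMod b) :=
      ⟨ZMod.chineseRemainder hab⟩
    obtain ⟨x1, y1, a1, b1, h1⟩ := iha (by omega) (e n).1
    obtain ⟨x2, y2, a2, b2, h2⟩ := ihb (by omega) (e n).2
    refine ⟨e.symm (x1, x2), e.symm (y1, y2), e.symm (a1, a2), e.symm (b1, b2), ?_⟩
    apply e.injective
    rw [map_add, map_add, map_add, map_pow, map_pow, map_pow, map_pow]
    simp only [RingEquiv.apply_symm_apply]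
    rw [Prod.pow_mk, Prod.pow_mk, Prod.pow_mk, Prod.pow_mk]
    rw [Prod.mk_add_mk, Prod.mk_add_mk, Prod.mk_add_mk]
    rw [h1, h2]

/-- For every `q ≥ 1` and every integer `n`, the congruence
`x₁² + x₂² + x₃³ + x₄³ + x₅⁶ + x₆⁶ ≡ n (mod q)` is soluble. -/
theorem stmt_8 :
    ∀ q : ℕ, 1 ≤ q → ∀ n : ℤ,
      ∃ x : Fin 6 → ℤ,
        Int.ModEq (q : ℤ)
          (x 0 ^ 2 + x 1 ^ 2 + x 2 ^ 3 + x 3 ^ 3 + x 4 ^ 6 + x 5 ^ 6) n := by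
  intro q hq n
  haveI : NeZero q := ⟨by omega⟩
  obtain ⟨x, y, a, b, h⟩ := zmod_sol q (by omega) ((n : ZMod q))
  refine ⟨![(x.val : ℤ), (y.val : ℤ), (a.val : ℤ), (b.val : ℤ), 0, 0], ?_⟩
  show ((x.val : ℤ) ^ 2 + (y.val : ℤ) ^ 2 + (a.val : ℤ) ^ 3 + (b.val : ℤ) ^ 3
      + (0 : ℤ) ^ 6 + (0 : ℤ) ^ 6) ≡ n [ZMOD (q : ℤ)]
  rw [← ZMod.intCast_eq_intCast_iff]
  push_cast
  rw [ZMod.natCast_rightInverse x, ZMod.natCast_rightInverse y,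
    ZMod.natCast_rightInverse a, ZMod.natCast_rightInverse b]
  rw [← h]
  ring
end

section
/- Let X be large, let 𝒵 be any set of integers contained in (X/2, X] of cardinality Z, and for each n ∈ 𝒵 let η_n be a complex number with |η_n| = 1; put K(α) = Σ_{n ∈ 𝒵} η_n e(−nα). Then for each ε > 0 one has ∫₀¹ |f₃(α)² K(α)²| dα ≪ P₃ Z + P₃^{ε} Z². -/
open MeasureTheory Filter Set Topology

namespace Stmt11Aux
open MeasureTheory

lemma e_add (x y : ℝ) : e (x + y) = e x * e y := by
  simp [e, ← Complex.exp_add]; ring_nf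

lemma conj_e (x : ℝ) : (starRingEnd ℂ) (e x) = e (-x) := by
  simp only [e, ← Complex.exp_conj, map_mul, Complex.conj_I, Complex.conj_ofReal, map_ofNat]
  push_cast; ring_nf

lemma e_cont : Continuous e := by
  apply Complex.continuous_exp.comp; continuity

lemma e_int (k : ℤ) : e k = 1 := by
  simp only [e]
  rw [show 2 * (Real.pi:ℂ) * Complex.I * ((k:ℝ):ℂ) = (k:ℤ) * (2 * Real.pi * Complex.I) by push_cast; ring]
  exact Complex.exp_int_mul_two_pi_mul_I k

lemma orth (k : ℤ) : (∫ α in (0:ℝ)..1, e (k * α)) = if k = 0 then 1 else 0 := by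
  split_ifs with h
  · simp [h, e]
  · have hc : (2 * Real.pi * Complex.I * k) ≠ 0 := by
      simp [Complex.ext_iff, Real.pi_ne_zero, h]
    have : ∀ α : ℝ, e (k * α) = Complex.exp ((2 * Real.pi * Complex.I * k) * α) := by
      intro α; simp only [e]; push_cast; ring_nf
    rw [intervalIntegral.integral_congr (fun α _ => this α)]
    rw [integral_exp_mul_complex hc]
    have h1 : Complex.exp (2 * Real.pi * Complex.I * (k:ℂ) * ((1:ℝ):ℂ)) = 1 := by
      have := e_int k
      simp only [e] at this
      rw [show 2 * (Real.pi:ℂ) * Complex.I * (k:ℂ) * ((1:ℝ):ℂ) = 2 * Real.pi * Complex.I * ((k:ℝ):ℂ) by push_cast; ring]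
      exact this
    have h0 : Complex.exp (2 * Real.pi * Complex.I * (k:ℂ) * ((0:ℝ):ℂ)) = 1 := by simp
    rw [h1, h0]; simp

lemma divisor_bound (ε : ℝ) (hε : 0 < ε) :
    ∃ C : ℝ, 1 ≤ C ∧ ∀ n : ℕ, n ≠ 0 → (n.divisors.card : ℝ) ≤ C * (n:ℝ) ^ ε := by
  classical
  set M : ℝ := max 1 (2 / (ε * Real.log 2)) with hMdef
  have hM1 : (1:ℝ) ≤ M := le_max_left _ _
  set P₀ : ℕ := Nat.ceil ((2:ℝ) ^ (1/ε)) with hP0def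
  refine ⟨M ^ P₀, one_le_pow₀ hM1, ?_⟩
  intro n hn
  set S := n.primeFactors with hS
  -- pointwise bound
  set g : ℕ → ℝ := fun p => if (p:ℝ) < (2:ℝ) ^ (1/ε) then M else 1 with hg
  have key : ∀ p ∈ S, ((n.factorization p + 1 : ℕ) : ℝ) ≤
      g p * (((p : ℝ) ^ (n.factorization p : ℕ)) ^ ε) := by
    intro p hp
    have hprime : p.Prime := Nat.prime_of_mem_primeFactors hp
    have hp2 : (2:ℝ) ≤ (p:ℝ) := by exact_mod_cast hprime.two_le
    have hp0 : (0:ℝ) ≤ (p:ℝ) := by positivity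
    set a : ℕ := n.factorization p with ha
    have ha1 : 1 ≤ a := (Nat.Prime.factorization_pos_of_dvd hprime hn
      (Nat.dvd_of_mem_primeFactors hp))
    have hrw : (((p : ℝ) ^ (a : ℕ)) ^ ε) = (p:ℝ) ^ ((a:ℝ) * ε) := by
      rw [← Real.rpow_natCast (p:ℝ) a, ← Real.rpow_mul hp0]
    rw [hrw]
    by_cases hcase : (p:ℝ) < (2:ℝ) ^ (1/ε)
    · -- small prime
      simp only [hg, if_pos hcase]
      have h2 : (2:ℝ) ^ ((a:ℝ) * ε) ≤ (p:ℝ) ^ ((a:ℝ) * ε) :=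
        Real.rpow_le_rpow (by norm_num) hp2 (by positivity)
      have hexp : (a:ℝ) * ε * Real.log 2 ≤ (2:ℝ) ^ ((a:ℝ) * ε) := by
        rw [show (2:ℝ) ^ ((a:ℝ) * ε) = Real.exp ((a:ℝ) * ε * Real.log 2) by
          rw [Real.rpow_def_of_pos (by norm_num), mul_comm (Real.log 2)]]
        linarith [Real.add_one_le_exp ((a:ℝ) * ε * Real.log 2)]
      have hlog2 : (0:ℝ) < Real.log 2 := Real.log_pos (by norm_num)
      have hMge : 2 / (ε * Real.log 2) ≤ M := le_max_right _ _
      have hchain : 2 * (a:ℝ) ≤ M * (p:ℝ) ^ ((a:ℝ) * ε) := by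
        have h3 : (0:ℝ) < (a:ℝ) * ε * Real.log 2 := by
          have : (0:ℝ) < (a:ℝ) := by exact_mod_cast ha1
          positivity
        calc 2 * (a:ℝ) = (2 / (ε * Real.log 2)) * ((a:ℝ) * ε * Real.log 2) := by
              field_simp
        _ ≤ M * ((a:ℝ) * ε * Real.log 2) := by
              apply mul_le_mul_of_nonneg_right hMge h3.le
        _ ≤ M * (2:ℝ) ^ ((a:ℝ) * ε) := by
              apply mul_le_mul_of_nonneg_left hexp (by linarith)
        _ ≤ M * (p:ℝ) ^ ((a:ℝ) * ε) := by
              apply mul_le_mul_of_nonneg_left h2 (by linarith)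
      have : ((a + 1 : ℕ) : ℝ) ≤ 2 * (a:ℝ) := by
        push_cast
        have : (1:ℝ) ≤ (a:ℝ) := by exact_mod_cast ha1
        linarith
      linarith
    · -- large prime
      simp only [hg, if_neg hcase, one_mul]
      push_neg at hcase
      have h2 : ((2:ℝ) ^ (1/ε)) ^ ((a:ℝ) * ε) ≤ (p:ℝ) ^ ((a:ℝ) * ε) :=
        Real.rpow_le_rpow (by positivity) hcase (by positivity)
      have h3 : ((2:ℝ) ^ (1/ε)) ^ ((a:ℝ) * ε) = (2:ℝ) ^ (a:ℝ) := by
        rw [← Real.rpow_mul (by norm_num)]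
        congr 1
        field_simp
      have h4 : ((a + 1 : ℕ) : ℝ) ≤ (2:ℝ) ^ (a:ℝ) := by
        rw [Real.rpow_natCast]
        exact_mod_cast Nat.lt_two_pow_self (n := a)
      rw [h3] at h2
      linarith
  have hcast : (n.divisors.card : ℝ) = ∏ p ∈ S, ((n.factorization p + 1 : ℕ) : ℝ) := by
    rw [Nat.card_divisors hn]
    push_cast
    rfl
  have hnprod : ∏ p ∈ S, (p:ℝ) ^ (n.factorization p : ℕ) = (n:ℝ) := by
    have := Nat.factorization_prod_pow_eq_self hn
    have h2 : ∏ p ∈ S, p ^ n.factorization p = n := by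
      rw [hS, ← Nat.support_factorization]
      exact this
    exact_mod_cast congrArg (fun m : ℕ => (m:ℝ)) h2
  have hrpowprod : ∏ p ∈ S, ((p:ℝ) ^ (n.factorization p : ℕ)) ^ ε = (n:ℝ) ^ ε := by
    rw [Real.finset_prod_rpow S _ (fun p _ => by positivity) ε, hnprod]
  have hgprod : ∏ p ∈ S, g p ≤ M ^ P₀ := by
    set pred : ℕ → Prop := fun p => (p:ℝ) < (2:ℝ) ^ (1/ε) with hpred
    have h1 : ∏ p ∈ S, g p = (∏ p ∈ S.filter pred, g p) * ∏ p ∈ S.filter (fun p => ¬ pred p), g p :=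
      (Finset.prod_filter_mul_prod_filter_not S pred g).symm
    have h2 : ∏ p ∈ S.filter (fun p => ¬ pred p), g p = 1 := by
      apply Finset.prod_eq_one
      intro p hp
      simp only [Finset.mem_filter, hpred] at hp
      simp only [hg, if_neg hp.2]
    have h3 : ∏ p ∈ S.filter pred, g p = M ^ (S.filter pred).card := by
      rw [← Finset.prod_const]
      apply Finset.prod_congr rfl
      intro p hp
      simp only [Finset.mem_filter, hpred] at hp
      simp only [hg, if_pos hp.2]
    have hcard : (S.filter pred).card ≤ P₀ := by
      have hsub : S.filter pred ⊆ Finset.range P₀ := by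
        intro p hp
        simp only [Finset.mem_filter, hpred] at hp
        rw [Finset.mem_range]
        have : (p:ℝ) < (P₀:ℝ) := lt_of_lt_of_le hp.2 (Nat.le_ceil _)
        exact_mod_cast this
      calc (S.filter pred).card ≤ (Finset.range P₀).card := Finset.card_le_card hsub
        _ = P₀ := Finset.card_range P₀
    rw [h1, h2, h3, mul_one]
    exact pow_le_pow_right₀ hM1 hcard
  calc (n.divisors.card : ℝ) = ∏ p ∈ S, ((n.factorization p + 1 : ℕ) : ℝ) := hcast
    _ ≤ ∏ p ∈ S, (g p * (((p:ℝ) ^ (n.factorization p : ℕ)) ^ ε)) := by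
        apply Finset.prod_le_prod (fun p _ => by positivity) key
    _ = (∏ p ∈ S, g p) * ∏ p ∈ S, ((p:ℝ) ^ (n.factorization p : ℕ)) ^ ε :=
        Finset.prod_mul_distrib
    _ ≤ M ^ P₀ * (n:ℝ) ^ ε := by
        rw [hrpowprod]
        apply mul_le_mul_of_nonneg_right hgprod (by positivity)

lemma cube_strictMono : StrictMono (fun a : ℤ => a ^ 3) :=
  Odd.strictMono_pow (by decide)

lemma cube_diff_inj {a b a' b' : ℤ} (ha : 1 ≤ a) (hb : 1 ≤ b) (ha' : 1 ≤ a') (hb' : 1 ≤ b')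
    (hab : a ≠ b) (heq : a^3 - b^3 = a'^3 - b'^3)
    (habs : (a - b).natAbs = (a' - b').natAbs) : a = a' ∧ b = b' := by
  have hlt_iff : ∀ u v : ℤ, u^3 < v^3 ↔ u < v := fun u v => cube_strictMono.lt_iff_lt
  have hsame : a - b = a' - b' := by
    rcases Int.natAbs_eq_natAbs_iff.mp habs with h | h
    · exact h
    · rcases lt_or_gt_of_ne hab with hlt | hgt
      · have c1 : a^3 < b^3 := (hlt_iff a b).mpr hlt
        have c2 : a'^3 < b'^3 := by omega
        have c3 : a' < b' := (hlt_iff a' b').mp c2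
        omega
      · have c1 : b^3 < a^3 := (hlt_iff b a).mpr hgt
        have c2 : b'^3 < a'^3 := by omega
        have c3 : b' < a' := (hlt_iff b' a').mp c2
        omega
  have h2 : a' = b' + (a - b) := by omega
  have h1 : a = b + (a - b) := by ring
  rw [h1, h2] at heq
  have hkey : (b - b') * (3*(a-b)*(b+b'+(a-b))) = 0 := by linear_combination heq
  have hbb : b = b' := by
    rcases mul_eq_zero.mp hkey with h | h
    · omega
    · exfalso
      have hdne : a - b ≠ 0 := sub_ne_zero.mpr hab
      have hpos : 0 < b + b' + (a - b) := by omega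
      have : 3*(a-b) ≠ 0 := by omega
      exact (mul_ne_zero this (by omega)) h
  exact ⟨by omega, hbb⟩

lemma count_bound (P : ℕ) (Z : Finset ℤ) (D : ℕ)
    (hD : ∀ n ∈ Z, ∀ m ∈ Z, n ≠ m → (n - m).natAbs.divisors.card ≤ D) :
    ((((Finset.Icc 1 P) ×ˢ Z) ×ˢ ((Finset.Icc 1 P) ×ˢ Z)).filter
        (fun pq => ((pq.1.1 : ℤ)^3 - pq.1.2) = ((pq.2.1 : ℤ)^3 - pq.2.2))).card
      ≤ P * Z.card + D * Z.card ^ 2 := by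
  classical
  set A : Finset (ℕ × ℤ) := (Finset.Icc 1 P) ×ˢ Z with hA
  set T : Finset ((ℕ × ℤ) × (ℕ × ℤ)) := ((A ×ˢ A).filter
    (fun pq => ((pq.1.1 : ℤ)^3 - pq.1.2) = ((pq.2.1 : ℤ)^3 - pq.2.2))) with hT
  have hTmem : ∀ pq ∈ T, (1 ≤ pq.1.1 ∧ pq.1.1 ≤ P) ∧ pq.1.2 ∈ Z ∧
      (1 ≤ pq.2.1 ∧ pq.2.1 ≤ P) ∧ pq.2.2 ∈ Z ∧
      ((pq.1.1 : ℤ)^3 - pq.1.2) = ((pq.2.1 : ℤ)^3 - pq.2.2) := by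
    intro pq hpq
    simp only [hT, Finset.mem_filter, Finset.mem_product, hA, Finset.mem_Icc] at hpq
    refine ⟨?_, ?_, ?_, ?_, ?_⟩ <;> tauto
  have hsplit : (T.filter (fun pq => pq.1.1 = pq.2.1)).card
      + (T.filter (fun pq => ¬ pq.1.1 = pq.2.1)).card = T.card :=
    Finset.card_filter_add_card_filter_not _
  -- diagonal part
  have hdiag : (T.filter (fun pq => pq.1.1 = pq.2.1)).card ≤ P * Z.card := by
    have hle : (T.filter (fun pq => pq.1.1 = pq.2.1)).card ≤ A.card := by
      apply Finset.card_le_card_of_injOn (fun pq => pq.1)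
      · intro pq hpq
        have h1 : pq ∈ T := Finset.mem_filter.mp hpq |>.1
        obtain ⟨hx, hn, hy, hm, heq⟩ := hTmem pq h1
        simp only [Finset.mem_coe, hA, Finset.mem_product, Finset.mem_Icc]
        exact ⟨hx, hn⟩
      · intro pq hpq pq' hpq' heq
        simp only [Finset.mem_coe] at hpq hpq'
        have hdg : pq.1.1 = pq.2.1 := (Finset.mem_filter.mp hpq).2
        have hdg' : pq'.1.1 = pq'.2.1 := (Finset.mem_filter.mp hpq').2
        have hmem := hTmem pq (Finset.mem_filter.mp hpq).1
        have hmem' := hTmem pq' (Finset.mem_filter.mp hpq').1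
        have heq1 : pq.1 = pq'.1 := heq
        have hx : pq.1.1 = pq'.1.1 := by rw [heq1]
        have hn : pq.1.2 = pq'.1.2 := by rw [heq1]
        have hy : pq.2.1 = pq'.2.1 := by rw [← hdg, ← hdg', hx]
        have hm : pq.2.2 = pq'.2.2 := by
          have e1 := hmem.2.2.2.2
          have e2 := hmem'.2.2.2.2
          rw [← hdg] at e1
          rw [← hdg'] at e2
          have h1 : pq.1.2 = pq.2.2 := by omega
          have h2 : pq'.1.2 = pq'.2.2 := by omega
          rw [← h1, ← h2, hn]
        exact Prod.ext heq1 (Prod.ext hy hm)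
    calc _ ≤ A.card := hle
      _ = P * Z.card := by rw [hA, Finset.card_product, Nat.card_Icc]; simp
  -- off-diagonal part
  have hoff : (T.filter (fun pq => ¬ pq.1.1 = pq.2.1)).card ≤ D * Z.card ^ 2 := by
    set T₂ := T.filter (fun pq => ¬ pq.1.1 = pq.2.1) with hT2
    have hmaps : ∀ pq ∈ T₂, (pq.1.2, pq.2.2) ∈ Z ×ˢ Z := by
      intro pq hpq
      have hmem := hTmem pq (Finset.mem_filter.mp hpq).1
      rw [Finset.mem_product]
      exact ⟨hmem.2.1, hmem.2.2.2.1⟩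
    rw [Finset.card_eq_sum_card_fiberwise hmaps]
    have hfiber : ∀ nm ∈ Z ×ˢ Z,
        (T₂.filter (fun pq => (pq.1.2, pq.2.2) = nm)).card ≤ D := by
      intro nm hnm
      set Fb := T₂.filter (fun pq => (pq.1.2, pq.2.2) = nm) with hFb
      have hstruct : ∀ pq ∈ Fb, 1 ≤ pq.1.1 ∧ 1 ≤ pq.2.1 ∧ pq.1.1 ≠ pq.2.1 ∧
          pq.1.2 = nm.1 ∧ pq.2.2 = nm.2 ∧
          ((pq.1.1 : ℤ))^3 - ((pq.2.1 : ℤ))^3 = nm.1 - nm.2 := by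
        intro pq hpq
        have h2 : (pq.1.2, pq.2.2) = nm := (Finset.mem_filter.mp hpq).2
        have h3 : pq ∈ T₂ := (Finset.mem_filter.mp hpq).1
        have hne : ¬ pq.1.1 = pq.2.1 := (Finset.mem_filter.mp h3).2
        have hmem := hTmem pq (Finset.mem_filter.mp h3).1
        have hn1 : pq.1.2 = nm.1 := by rw [← h2]
        have hm1 : pq.2.2 = nm.2 := by rw [← h2]
        refine ⟨hmem.1.1, hmem.2.2.1.1, hne, hn1, hm1, ?_⟩
        have := hmem.2.2.2.2
        rw [← hn1, ← hm1]
        omega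
      have hNne : ∀ pq ∈ Fb, nm.1 - nm.2 ≠ 0 := by
        intro pq hpq hzero
        obtain ⟨hx1, hy1, hne, _, _, heq⟩ := hstruct pq hpq
        rw [hzero, sub_eq_zero] at heq
        have : ((pq.1.1 : ℤ)) = ((pq.2.1 : ℤ)) := cube_strictMono.injective heq
        exact hne (by exact_mod_cast this)
      have hinj : (Fb).card ≤ (nm.1 - nm.2).natAbs.divisors.card := by
        apply Finset.card_le_card_of_injOn
          (fun pq => ((pq.1.1 : ℤ) - (pq.2.1 : ℤ)).natAbs)
        · intro pq hpq
          obtain ⟨hx1, hy1, hne, _, _, heq⟩ := hstruct pq hpq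
          simp only [Finset.mem_coe, Nat.mem_divisors]
          constructor
          · apply Int.natAbs_dvd_natAbs.mpr
            rw [← heq]
            exact ⟨(pq.1.1:ℤ)^2 + (pq.1.1:ℤ)*(pq.2.1:ℤ) + (pq.2.1:ℤ)^2, by ring⟩
          · intro h0
            exact hNne pq hpq (by simpa [Int.natAbs_eq_zero] using h0)
        · intro pq hpq pq' hpq' heqd
          simp only [Finset.mem_coe] at hpq hpq'
          obtain ⟨hx1, hy1, hne, hn1, hm1, heq⟩ := hstruct pq hpq
          obtain ⟨hx1', hy1', hne', hn1', hm1', heq'⟩ := hstruct pq' hpq'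
          have heq3 : ((pq.1.1:ℤ))^3 - ((pq.2.1:ℤ))^3
              = ((pq'.1.1:ℤ))^3 - ((pq'.2.1:ℤ))^3 := by rw [heq, heq']
          have habs : ((pq.1.1:ℤ) - (pq.2.1:ℤ)).natAbs
              = ((pq'.1.1:ℤ) - (pq'.2.1:ℤ)).natAbs := heqd
          obtain ⟨haa, hbb⟩ := cube_diff_inj
            (by exact_mod_cast hx1) (by exact_mod_cast hy1)
            (by exact_mod_cast hx1') (by exact_mod_cast hy1')
            (fun h => hne (by exact_mod_cast h)) heq3 habs
          have h12 : pq.1 = pq'.1 := Prod.ext (by exact_mod_cast haa) (by rw [hn1, hn1'])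
          have h22 : pq.2 = pq'.2 := Prod.ext (by exact_mod_cast hbb) (by rw [hm1, hm1'])
          exact Prod.ext h12 h22
      by_cases hN : nm.1 - nm.2 = 0
      · have hemp : Fb = ∅ := by
          rw [Finset.eq_empty_iff_forall_notMem]
          intro pq hpq
          exact hNne pq hpq hN
        rw [hemp]
        simp
      · have hnZ := Finset.mem_product.mp hnm
        exact le_trans hinj (hD _ hnZ.1 _ hnZ.2 (sub_ne_zero.mp hN))
    calc ∑ nm ∈ Z ×ˢ Z, (T₂.filter (fun pq => (pq.1.2, pq.2.2) = nm)).card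
        ≤ ∑ _nm ∈ Z ×ˢ Z, D := Finset.sum_le_sum hfiber
      _ = (Z ×ˢ Z).card * D := by rw [Finset.sum_const, smul_eq_mul]
      _ = D * Z.card ^ 2 := by rw [Finset.card_product]; ring
  omega

section
variable (P : ℕ) (Z : Finset ℤ) (η : ℤ → ℂ)

lemma integral_le_count (hη : ∀ n ∈ Z, ‖η n‖ = 1) :
    (∫ α in (0:ℝ)..1,
        ‖∑ x ∈ Finset.Icc 1 P, e (α * (x:ℝ) ^ 3)‖ ^ 2 *
        ‖∑ n ∈ Z, η n * e (-((n : ℝ) * α))‖ ^ 2)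
      ≤ ((((Finset.Icc 1 P) ×ˢ Z) ×ˢ ((Finset.Icc 1 P) ×ˢ Z)).filter
          (fun pq => ((pq.1.1 : ℤ)^3 - pq.1.2) = ((pq.2.1 : ℤ)^3 - pq.2.2))).card := by
  classical
  set A : Finset (ℕ × ℤ) := (Finset.Icc 1 P) ×ˢ Z with hA
  set ν : ℕ × ℤ → ℤ := fun p => (p.1 : ℤ)^3 - p.2 with hν
  set c : ℕ × ℤ → ℂ := fun p => η p.2 with hc
  set F : ℝ → ℂ := fun α => ∑ p ∈ A, c p * e ((ν p : ℝ) * α) with hF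
  -- pointwise identity for the integrand
  have habs : ∀ α : ℝ,
      ‖∑ x ∈ Finset.Icc 1 P, e (α * (x:ℝ) ^ 3)‖ ^ 2 *
        ‖∑ n ∈ Z, η n * e (-((n : ℝ) * α))‖ ^ 2
      = (F α * (starRingEnd ℂ) (F α)).re := by
    intro α
    have hFeq : F α = (∑ x ∈ Finset.Icc 1 P, e (α * (x:ℝ) ^ 3)) *
        (∑ n ∈ Z, η n * e (-((n : ℝ) * α))) := by
      simp only [hF, hA, hν, hc]
      rw [Finset.sum_mul_sum]
      rw [Finset.sum_product]
      apply Finset.sum_congr rfl; intro x hx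
      apply Finset.sum_congr rfl; intro n hn
      rw [show ((((x:ℤ)^3 - n : ℤ)) : ℝ) * α = α * (x:ℝ)^3 + -((n:ℝ) * α) by push_cast; ring]
      rw [e_add]; ring
    rw [Complex.mul_conj, hFeq]
    simp only [Complex.normSq_eq_norm_sq]
    rw [Complex.ofReal_re, norm_mul, mul_pow]
  -- the quadruple-sum identity
  have hptwise : ∀ α : ℝ, F α * (starRingEnd ℂ) (F α)
      = ∑ p ∈ A, ∑ q ∈ A, (c p * (starRingEnd ℂ) (c q)) * e (((ν p - ν q : ℤ) : ℝ) * α) := by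
    intro α
    rw [hF, map_sum, Finset.sum_mul_sum]
    apply Finset.sum_congr rfl; intro p hp
    apply Finset.sum_congr rfl; intro q hq
    rw [map_mul, conj_e]
    rw [show (((ν p - ν q : ℤ)) : ℝ) * α = (ν p : ℝ) * α + -((ν q : ℝ) * α) by push_cast; ring]
    rw [e_add]; ring
  -- integrate
  have hint : (∫ α in (0:ℝ)..1, F α * (starRingEnd ℂ) (F α))
      = ∑ p ∈ A, ∑ q ∈ A, (c p * (starRingEnd ℂ) (c q)) * (if ν p - ν q = 0 then 1 else 0) := by
    rw [intervalIntegral.integral_congr (fun α _ => hptwise α)]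
    rw [intervalIntegral.integral_finset_sum]
    · apply Finset.sum_congr rfl; intro p hp
      rw [intervalIntegral.integral_finset_sum]
      · apply Finset.sum_congr rfl; intro q hq
        rw [intervalIntegral.integral_const_mul, orth]
      · intro q hq
        apply Continuous.intervalIntegrable
        exact continuous_const.mul (e_cont.comp (continuous_const.mul continuous_id))
    · intro p hp
      apply Continuous.intervalIntegrable
      apply continuous_finset_sum
      intro q hq
      exact continuous_const.mul (e_cont.comp (continuous_const.mul continuous_id))
  have hFcont : Continuous F := by
    apply continuous_finset_sum
    intro p _
    exact continuous_const.mul (e_cont.comp (continuous_const.mul continuous_id))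
  have hGcont : Continuous (fun α => F α * (starRingEnd ℂ) (F α)) :=
    hFcont.mul (Complex.continuous_conj.comp hFcont)
  have h1 : (∫ α in (0:ℝ)..1,
      ‖∑ x ∈ Finset.Icc 1 P, e (α * (x:ℝ) ^ 3)‖ ^ 2 *
        ‖∑ n ∈ Z, η n * e (-((n : ℝ) * α))‖ ^ 2)
      = (∫ α in (0:ℝ)..1, F α * (starRingEnd ℂ) (F α)).re := by
    rw [intervalIntegral.integral_congr (fun α _ => habs α)]
    rw [intervalIntegral.integral_of_le (by norm_num : (0:ℝ) ≤ 1),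
      intervalIntegral.integral_of_le (by norm_num : (0:ℝ) ≤ 1)]
    simp only [← RCLike.re_to_complex]
    rw [← integral_re (hGcont.integrableOn_Ioc)]
  rw [h1, hint]
  calc (∑ p ∈ A, ∑ q ∈ A, (c p * (starRingEnd ℂ) (c q)) *
          (if ν p - ν q = 0 then (1:ℂ) else 0)).re
      ≤ ‖∑ p ∈ A, ∑ q ∈ A, (c p * (starRingEnd ℂ) (c q)) *
          (if ν p - ν q = 0 then (1:ℂ) else 0)‖ := Complex.re_le_norm _
    _ ≤ ∑ p ∈ A, ∑ q ∈ A, ‖(c p * (starRingEnd ℂ) (c q)) *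
          (if ν p - ν q = 0 then (1:ℂ) else 0)‖ :=
        le_trans (norm_sum_le _ _) (Finset.sum_le_sum fun p _ => norm_sum_le _ _)
    _ ≤ ∑ p ∈ A, ∑ q ∈ A, (if ν p - ν q = 0 then (1:ℝ) else 0) := by
        apply Finset.sum_le_sum
        intro p hp
        apply Finset.sum_le_sum
        intro q hq
        rw [norm_mul, norm_mul]
        have hp1 : ‖c p‖ = 1 := hη _ (Finset.mem_product.mp (by rwa [hA] at hp)).2
        have hq1 : ‖(starRingEnd ℂ) (c q)‖ = 1 := by
          rw [Complex.norm_conj]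
          exact hη _ (Finset.mem_product.mp (by rwa [hA] at hq)).2
        rw [hp1, hq1]
        split_ifs <;> simp
    _ = ((((Finset.Icc 1 P) ×ˢ Z) ×ˢ ((Finset.Icc 1 P) ×ˢ Z)).filter
          (fun pq => ((pq.1.1 : ℤ)^3 - pq.1.2) = ((pq.2.1 : ℤ)^3 - pq.2.2))).card := by
        rw [← Finset.sum_product']
        simp only [sub_eq_zero]
        rw [Finset.sum_boole]

end

end Stmt11Aux

/-- Lemma 5.2: `∫₀¹ |f₃(α)² K(α)²| dα ≪ P₃ Z + P₃^ε Z²`. -/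
theorem stmt_11 :
    ∀ ε : ℝ, 0 < ε → ∃ C X₀ : ℝ, ∀ X : ℝ, X₀ ≤ X →
      ∀ (Z : Finset ℤ) (η : ℤ → ℂ),
        (∀ n ∈ Z, X / 2 < (n : ℝ) ∧ (n : ℝ) ≤ X) →
        (∀ n ∈ Z, ‖η n‖ = 1) →
        (∫ α in (0:ℝ)..1, ‖f X 3 α‖ ^ 2 * ‖K Z η α‖ ^ 2)
          ≤ C * ((Pk X 3 : ℝ) * (Z.card : ℝ) + (Pk X 3 : ℝ) ^ ε * (Z.card : ℝ) ^ 2) := by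
  intro ε hε
  obtain ⟨C₀, hC₀1, hC₀⟩ := Stmt11Aux.divisor_bound (ε/3) (by linarith)
  refine ⟨C₀ * (2:ℝ)^ε + 1, 8, ?_⟩
  intro X hX Z η hZ hη
  have hX0 : (0:ℝ) < X := by linarith
  have h2e : (0:ℝ) < (2:ℝ)^ε := Real.rpow_pos_of_pos (by norm_num) ε
  have hX13 : (2:ℝ) ≤ X ^ ((1:ℝ)/3) := by
    have h8 : (8:ℝ) ^ ((1:ℝ)/3) = 2 := by
      rw [show (8:ℝ) = 2^(3:ℕ) by norm_num, ← Real.rpow_natCast 2 3,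
        ← Real.rpow_mul (by norm_num)]
      norm_num
    rw [← h8]
    exact Real.rpow_le_rpow (by norm_num) hX (by norm_num)
  have hPk3 : Pk X 3 = Nat.floor (X ^ ((1:ℝ)/3)) := by unfold Pk; norm_num
  have hP1 : 1 ≤ Pk X 3 := by
    rw [hPk3]
    exact Nat.le_floor (by push_cast; linarith)
  have hP1R : (1:ℝ) ≤ (Pk X 3 : ℝ) := by exact_mod_cast hP1
  have hPle : X ^ ((1:ℝ)/3) ≤ 2 * (Pk X 3 : ℝ) := by
    have h2 := Nat.lt_floor_add_one (X ^ ((1:ℝ)/3))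
    rw [hPk3]
    rw [hPk3] at hP1R
    linarith
  set D : ℕ := ⌈C₀ * X ^ (ε/3)⌉₊ with hDdef
  have hXe3 : (0:ℝ) ≤ X ^ (ε/3) := Real.rpow_nonneg hX0.le _
  have hDbound : ∀ n ∈ Z, ∀ m ∈ Z, n ≠ m → (n - m).natAbs.divisors.card ≤ D := by
    intro n hn m hm hne
    have ht0 : (n - m).natAbs ≠ 0 := by
      simp only [ne_eq, Int.natAbs_eq_zero, sub_eq_zero]
      exact hne
    have htX : (((n - m).natAbs : ℕ) : ℝ) ≤ X := by
      rw [Nat.cast_natAbs]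
      push_cast
      obtain ⟨hn1, hn2⟩ := hZ n hn
      obtain ⟨hm1, hm2⟩ := hZ m hm
      rw [abs_le]
      constructor <;> linarith
    have h1 : (((n - m).natAbs.divisors.card : ℕ) : ℝ) ≤ C₀ * ((n - m).natAbs : ℝ) ^ (ε/3) :=
      hC₀ _ ht0
    have h2 : ((n - m).natAbs : ℝ) ^ (ε/3) ≤ X ^ (ε/3) :=
      Real.rpow_le_rpow (by positivity) htX (by linarith)
    have h3 : (((n - m).natAbs.divisors.card : ℕ) : ℝ) ≤ (D : ℝ) := by
      calc (((n - m).natAbs.divisors.card : ℕ) : ℝ) ≤ C₀ * ((n - m).natAbs : ℝ) ^ (ε/3) := h1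
        _ ≤ C₀ * X ^ (ε/3) := by
            apply mul_le_mul_of_nonneg_left h2 (by linarith)
        _ ≤ (D : ℝ) := Nat.le_ceil _
    exact_mod_cast h3
  have hcount := Stmt11Aux.count_bound (Pk X 3) Z D hDbound
  have hint := Stmt11Aux.integral_le_count (Pk X 3) Z η hη
  have hDreal : (D : ℝ) ≤ C₀ * X ^ (ε/3) + 1 :=
    le_of_lt (Nat.ceil_lt_add_one (by positivity))
  have hXe : X ^ (ε/3) ≤ (2:ℝ)^ε * (Pk X 3 : ℝ)^ε := by
    have h1 : X ^ (ε/3) = (X ^ ((1:ℝ)/3)) ^ ε := by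
      rw [← Real.rpow_mul hX0.le]
      congr 1
      ring
    rw [h1]
    calc (X ^ ((1:ℝ)/3)) ^ ε ≤ (2 * (Pk X 3 : ℝ)) ^ ε :=
          Real.rpow_le_rpow (Real.rpow_nonneg hX0.le _) hPle hε.le
      _ = (2:ℝ)^ε * (Pk X 3 : ℝ)^ε := Real.mul_rpow (by norm_num) (by positivity)
  have hPe1 : (1:ℝ) ≤ (Pk X 3 : ℝ)^ε := by
    calc (1:ℝ) = (1:ℝ)^ε := (Real.one_rpow ε).symm
      _ ≤ (Pk X 3 : ℝ)^ε := Real.rpow_le_rpow (by norm_num) hP1R hε.le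
  set Pr : ℝ := (Pk X 3 : ℝ) with hPr
  set Zc : ℝ := (Z.card : ℝ) with hZc
  have hZc0 : (0:ℝ) ≤ Zc := by positivity
  have hPr0 : (0:ℝ) ≤ Pr := by positivity
  have hchain : (∫ α in (0:ℝ)..1,
      ‖f X 3 α‖ ^ 2 * ‖K Z η α‖ ^ 2)
      ≤ Pr * Zc + (D : ℝ) * Zc ^ 2 := by
    have hcast : ((Pk X 3 * Z.card + D * Z.card ^ 2 : ℕ) : ℝ)
        = Pr * Zc + (D : ℝ) * Zc ^ 2 := by push_cast; ring
    calc (∫ α in (0:ℝ)..1, ‖f X 3 α‖ ^ 2 * ‖K Z η α‖ ^ 2)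
        = (∫ α in (0:ℝ)..1,
            ‖∑ x ∈ Finset.Icc 1 (Pk X 3), e (α * (x:ℝ) ^ 3)‖ ^ 2 *
            ‖∑ n ∈ Z, η n * e (-((n : ℝ) * α))‖ ^ 2) := by rfl
      _ ≤ _ := hint
      _ ≤ ((Pk X 3 * Z.card + D * Z.card ^ 2 : ℕ) : ℝ) := by exact_mod_cast hcount
      _ = Pr * Zc + (D : ℝ) * Zc ^ 2 := hcast
  have hDfin : (D : ℝ) ≤ (C₀ * (2:ℝ)^ε + 1) * Pr ^ ε := by
    calc (D : ℝ) ≤ C₀ * X ^ (ε/3) + 1 := hDreal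
      _ ≤ C₀ * ((2:ℝ)^ε * Pr ^ ε) + Pr ^ ε := by
          have := mul_le_mul_of_nonneg_left hXe (by linarith : (0:ℝ) ≤ C₀)
          linarith
      _ = (C₀ * (2:ℝ)^ε + 1) * Pr ^ ε := by ring
  have hPeps0 : (0:ℝ) ≤ Pr ^ ε := by positivity
  calc (∫ α in (0:ℝ)..1, ‖f X 3 α‖ ^ 2 * ‖K Z η α‖ ^ 2)
      ≤ Pr * Zc + (D : ℝ) * Zc ^ 2 := hchain
    _ ≤ Pr * Zc + ((C₀ * (2:ℝ)^ε + 1) * Pr ^ ε) * Zc ^ 2 := by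
        have := mul_le_mul_of_nonneg_right hDfin (by positivity : (0:ℝ) ≤ Zc ^ 2)
        linarith
    _ ≤ (C₀ * (2:ℝ)^ε + 1) * (Pr * Zc + Pr ^ ε * Zc ^ 2) := by
        have hC1 : (1:ℝ) ≤ C₀ * (2:ℝ)^ε + 1 := by nlinarith
        nlinarith [mul_nonneg hPr0 hZc0]
end
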